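/- The multiplication map μ₀ on the disjoint union ⨆_{n∈ℕ} B(n), defined on B(n) ⊗ B(m) by projecting the Clebsch–Gordan decomposition onto the top component B(n+m), is given explicitly by μ₀(x^i y^j ⊗ x^r y^s) = x^{i+r} y^s if j = 0, x^i y^{j+s} if r = 0, and 0 if j ≠ 0 ≠ r; moreover this gives an associative multiplication with unit x^0 y^0, agreeing with the monomial multiplication in k⟨x,y⟩/(xy). -/

import Mathlib

/-- `x^i y^j` is represented as `(i, j) : ℕ × ℕ`, an element of the sl2-crystal `B(i+j)`. -/
def et (p : ℕ × ℕ) : Option (ℕ × ℕ) := if p.1 = 0 then none else some (p.1 - 1, p.2 + 1)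
def ft (p : ℕ × ℕ) : Option (ℕ × ℕ) := if p.2 = 0 then none else some (p.1 + 1, p.2 - 1)
def eps (p : ℕ × ℕ) : ℤ := p.1
def phi (p : ℕ × ℕ) : ℤ := p.2
def wt (p : ℕ × ℕ) : ℤ := (p.2 : ℤ) - (p.1 : ℤ)

/-- Kashiwara tensor product rule for `ẽ` on a pair of elements. -/
def etT (b : (ℕ × ℕ) × (ℕ × ℕ)) : Option ((ℕ × ℕ) × (ℕ × ℕ)) :=
  if eps b.2 ≤ phi b.1 then (et b.1).map (fun a => (a, b.2)) else (et b.2).map (fun a => (b.1, a))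

/-- Kashiwara tensor product rule for `f̃` on a pair of elements. -/
def ftT (b : (ℕ × ℕ) × (ℕ × ℕ)) : Option ((ℕ × ℕ) × (ℕ × ℕ)) :=
  if eps b.2 < phi b.1 then (ft b.1).map (fun a => (a, b.2)) else (ft b.2).map (fun a => (b.1, a))

def epsT (b : (ℕ × ℕ) × (ℕ × ℕ)) : ℤ := max (eps b.1) (eps b.2 - wt b.1)
def phiT (b : (ℕ × ℕ) × (ℕ × ℕ)) : ℤ := max (phi b.1 + wt b.2) (phi b.2)
def wtT (b : (ℕ × ℕ) × (ℕ × ℕ)) : ℤ := wt b.1 + wt b.2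

/-- Iterated application of a pointed (partial) operator. -/
def iterOp {α : Type} (g : α → Option α) : ℕ → α → Option α
  | 0, a => some a
  | n + 1, a => (g a).bind (iterOp g n)

/-- The underlying set of the sl2-crystal `B(n)`: monomials `x^i y^j` with `i + j = n`. -/
def Bel (n : ℕ) : Type := {p : ℕ × ℕ // p.1 + p.2 = n}

def etB {n : ℕ} (b : Bel n) : Option (Bel n) :=
  if h : b.val.1 = 0 then none
  else some ⟨(b.val.1 - 1, b.val.2 + 1), by have := b.2; omega⟩

def ftB {n : ℕ} (b : Bel n) : Option (Bel n) :=
  if h : b.val.2 = 0 then none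
  else some ⟨(b.val.1 + 1, b.val.2 - 1), by have := b.2; omega⟩

/-- The multiplication `μ₀` on `⨆_{n∈ℕ} B(n)` (elements `x^i y^j`, with `B(n) ⊗ B(m)`
projected onto the top Clebsch–Gordan component `B(n+m)`), given by its explicit formula. -/
def mu0 (x : (ℕ × ℕ) × (ℕ × ℕ)) : Option (ℕ × ℕ) :=
  if x.1.2 = 0 then some (x.1.1 + x.2.1, x.2.2)
  else if x.2.1 = 0 then some (x.1.1, x.1.2 + x.2.2)
  else none

lemma iterOp_succ' {α : Type} (g : α → Option α) (t : ℕ) (a : α) :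
    iterOp g (t + 1) a = (iterOp g t a).bind g := by
  induction t generalizing a with
  | zero => simp [iterOp]
  | succ t ih =>
    show (g a).bind (iterOp g (t + 1)) = ((g a).bind (iterOp g t)).bind g
    cases h : g a with
    | none => rfl
    | some b => exact ih b

lemma some_bind' {α β : Type} (a : α) (f : α → Option β) : (some a).bind f = f a := rfl

lemma key (n m t : ℕ) : iterOp ftT t ((0, n), (0, m)) =
    if t ≤ n then some ((t, n - t), (0, m))
    else if t ≤ n + m then some ((n, 0), (t - n, n + m - t)) else none := by
  induction t with
  | zero => simp [iterOp]
  | succ t ih =>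
    rw [iterOp_succ', ih]
    by_cases h1 : t ≤ n
    · by_cases h2 : t + 1 ≤ n
      · rw [if_pos h1, if_pos h2]
        rw [some_bind']; unfold ftT; dsimp only
        rw [if_pos (by simp [eps, phi]; omega)]
        rw [show ft (t, n - t) = some (t + 1, n - t - 1) from by
          unfold ft; rw [if_neg (by simp; omega)]]
        simp only [Option.map_some, Option.some.injEq, Prod.mk.injEq, true_and, and_true]
        omega
      · have ht : t = n := by omega
        subst ht
        rw [if_pos h1]
        rw [some_bind']; unfold ftT; dsimp only
        rw [if_neg (by simp [eps, phi])]
        by_cases hm : m = 0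
        · subst hm
          rw [show ft (0, 0) = none from rfl]
          simp only [Option.map_none]
          rw [if_neg h2, if_neg (by omega)]
        · rw [show ft (0, m) = some (1, m - 1) from by unfold ft; rw [if_neg hm]]
          simp only [Option.map_some]
          simp only [Option.map_some, Option.some.injEq, Prod.mk.injEq, true_and, and_true,
            if_neg h2, if_pos (show t+1 ≤ t+m by omega)]
          omega
    · by_cases h2 : t ≤ n + m
      · rw [if_neg h1, if_pos h2]
        rw [some_bind']; unfold ftT; dsimp only
        rw [if_neg (by simp [eps, phi])]
        by_cases h3 : t + 1 ≤ n + m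
        · rw [show ft (t - n, n + m - t) = some (t - n + 1, n + m - t - 1) from by
            unfold ft; rw [if_neg (by simp; omega)]]
          simp only [Option.map_some]
          simp only [Option.map_some, Option.some.injEq, Prod.mk.injEq, true_and, and_true,
            if_neg (show ¬ t+1 ≤ n by omega), if_pos h3]
          omega
        · rw [show ft (t - n, n + m - t) = none from by
            unfold ft; rw [if_pos (by simp; omega)]]
          simp only [Option.map_none]
          rw [if_neg (by omega), if_neg h3]
      · rw [if_neg h1, if_neg h2]
        show (none : Option ((ℕ × ℕ) × (ℕ × ℕ))) = _
        rw [if_neg (by omega), if_neg (by omega)]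

/-- `μ₀` is given explicitly by
`μ₀(x^i y^j ⊗ x^r y^s) = x^{i+r} y^s` if `j = 0`, `x^i y^{j+s}` if `r = 0`, and `0`
otherwise; it is exactly the projection onto the top Clebsch–Gordan component `B(n+m)`
(the connected component of the highest weight element `y^n ⊗ y^m`, on which it is the
crystal identification with `B(n+m)`, vanishing off this component); and it is an
associative multiplication with unit `x^0 y^0`, agreeing with the multiplication of monic
monomials in `k⟨x,y⟩/(xy)`. -/
theorem stmt5 :
    (∀ i r s : ℕ, mu0 ((i, 0), (r, s)) = some (i + r, s)) ∧
    (∀ i j s : ℕ, mu0 ((i, j), (0, s)) = some (i, j + s)) ∧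
    (∀ i j r s : ℕ, j ≠ 0 → r ≠ 0 → mu0 ((i, j), (r, s)) = none) ∧
    (∀ n m t : ℕ, t ≤ n + m → ∃ b, iterOp ftT t ((0, n), (0, m)) = some b ∧
        mu0 b = some (t, n + m - t)) ∧
    (∀ b : (ℕ × ℕ) × (ℕ × ℕ),
        (∀ t : ℕ, iterOp ftT t ((0, b.1.1 + b.1.2), (0, b.2.1 + b.2.2)) ≠ some b) →
        mu0 b = none) ∧
    (∀ b : ℕ × ℕ, mu0 ((0, 0), b) = some b ∧ mu0 (b, (0, 0)) = some b) ∧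
    (∀ a b c : ℕ × ℕ,
        (mu0 (a, b)).bind (fun p => mu0 (p, c)) =
        (mu0 (b, c)).bind (fun p => mu0 (a, p))) := by
  refine ⟨?_, ?_, ?_, ?_, ?_, ?_, ?_⟩
  · intro i r s; simp [mu0]
  · intro i j s
    by_cases hj : j = 0
    · subst hj; simp [mu0]
    · simp [mu0, hj]
  · intro i j r s hj hr; simp [mu0, hj, hr]
  · intro n m t ht
    rw [key]
    by_cases h : t ≤ n
    · rw [if_pos h]
      refine ⟨_, rfl, ?_⟩
      unfold mu0
      dsimp only
      split_ifs <;>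
        first
        | omega
        | (simp only [Option.some.injEq, Prod.mk.injEq, true_and, and_true]; omega)
    · rw [if_neg h, if_pos ht]
      refine ⟨_, rfl, ?_⟩
      unfold mu0
      dsimp only
      split_ifs <;>
        first
        | omega
        | (simp only [Option.some.injEq, Prod.mk.injEq, true_and, and_true]; omega)
  · intro b hb
    by_contra hne
    obtain ⟨⟨i, j⟩, ⟨r, s⟩⟩ := b
    by_cases hj : j = 0
    · subst hj
      apply hb (i + r)
      dsimp only
      rw [key]
      by_cases hr : r = 0
      · subst hr
        rw [if_pos (by omega)]
        simp
      · rw [if_neg (by omega), if_pos (by omega)]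
        simp only [Option.some.injEq, Prod.mk.injEq, true_and, and_true]
        omega
    · by_cases hr : r = 0
      · subst hr
        apply hb i
        dsimp only
        rw [key, if_pos (by omega)]
        simp only [Option.some.injEq, Prod.mk.injEq, true_and, and_true]
        omega
      · exact hne (by simp [mu0, hj, hr])
  · intro b
    obtain ⟨i, j⟩ := b
    by_cases hj : j = 0 <;> simp [mu0, hj]
  · intro a b c
    obtain ⟨i, j⟩ := a; obtain ⟨r, s⟩ := b; obtain ⟨u, v⟩ := c
    by_cases hj : j = 0 <;> by_cases hr : r = 0 <;> by_cases hs : s = 0 <;>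
      by_cases hu : u = 0 <;>
      simp [mu0, hj, hr, hs, hu, Prod.ext_iff] <;> omega
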